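/- L2 bounds for the inverse backstepping transformation: let A be a real n x n matrix, B in R^n, K a 1 x n row vector, and D_hat > 0. There exist positive constants N1 and N2 (depending only on A, B, K, D_hat) such that for every X in R^n and every continuously differentiable w_hat : [0,1] -> R, the function u_hat(x) = w_hat(x) + K e^{(A + B K) D_hat x} X + D_hat * integral from 0 to x of K e^{(A + B K) D_hat (x - y)} B w_hat(y) dy satisfies integral from 0 to 1 of u_hat(x)^2 dx <= N1 * ( |X|^2 + integral from 0 to 1 of w_hat(x)^2 dx ) and integral from 0 to 1 of (u_hat'(x))^2 dx <= N2 * ( |X|^2 + integral from 0 to 1 of w_hat(x)^2 dx + integral from 0 to 1 of (w_hat'(x))^2 dx ). -/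

import Mathlib

open Matrix MeasureTheory intervalIntegral Set

noncomputable section
set_option maxHeartbeats 1000000

attribute [local instance] Matrix.linftyOpNormedAddCommGroup Matrix.linftyOpNormedRing
  Matrix.linftyOpNormedAlgebra

namespace IBL2Aux

variable {n : ℕ}

/-- dot-mulVec expands as a sum over basis vectors. -/
lemma dot_single (Kv : Fin n → ℝ) (M : Matrix (Fin n) (Fin n) ℝ) (w : Fin n → ℝ) :
    Kv ⬝ᵥ M.mulVec w = ∑ j, (Kv ⬝ᵥ M.mulVec (Pi.single j 1)) * w j := by
  rw [Matrix.dotProduct_mulVec]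
  refine Finset.sum_congr rfl fun j _ => ?_
  rw [Matrix.dotProduct_mulVec, dotProduct_single, mul_one]

/-- the continuous linear functional `M ↦ K ⬝ᵥ M *ᵥ c`. -/
def Lc (K c : Fin n → ℝ) : Matrix (Fin n) (Fin n) ℝ →L[ℝ] ℝ :=
  LinearMap.toContinuousLinearMap
    { toFun := fun M => K ⬝ᵥ M.mulVec c
      map_add' := by intro M N; simp [Matrix.add_mulVec, dotProduct_add]
      map_smul' := by intro r M; simp [Matrix.smul_mulVec, dotProduct_smul] }

@[simp] lemma Lc_apply (K c : Fin n → ℝ) (M : Matrix (Fin n) (Fin n) ℝ) :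
    Lc K c M = K ⬝ᵥ M.mulVec c := rfl

/-- Cauchy–Schwarz on `[0,1]` with the constant function 1. -/
lemma sq_int_abs_le (f : ℝ → ℝ) (hf : Continuous f) :
    (∫ y in (0:ℝ)..1, |f y|) ^ 2 ≤ ∫ y in (0:ℝ)..1, (f y) ^ 2 := by
  set m := ∫ y in (0:ℝ)..1, |f y| with hm
  have h1 : (0:ℝ) ≤ ∫ y in (0:ℝ)..1, (|f y| - m)^2 :=
    intervalIntegral.integral_nonneg (by norm_num) (fun y _ => sq_nonneg _)
  have h2 : (∫ y in (0:ℝ)..1, (|f y| - m)^2)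
      = (∫ y in (0:ℝ)..1, (f y)^2) - 2*m*m + m^2 := by
    have hint1 : IntervalIntegrable (fun y => (f y)^2) volume 0 1 :=
      (hf.pow 2).intervalIntegrable _ _
    have hint2 : IntervalIntegrable (fun y => 2*m*|f y|) volume 0 1 :=
      (continuous_const.mul hf.abs).intervalIntegrable _ _
    have : ∀ y, (|f y| - m)^2 = (f y)^2 - 2*m*|f y| + m^2 := by
      intro y; rw [sub_sq]; rw [sq_abs]; ring
    simp_rw [this]
    rw [intervalIntegral.integral_add (hint1.sub hint2) (intervalIntegrable_const),
      intervalIntegral.integral_sub hint1 hint2, intervalIntegral.integral_const_mul]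
    simp [← hm]
  nlinarith [h1, h2]

end IBL2Aux

open IBL2Aux

/-- L² bounds for the inverse backstepping transformation (Lemma 11). -/
theorem inverse_backstepping_L2_bounds
    (n : ℕ) (A : Matrix (Fin n) (Fin n) ℝ) (B K : Fin n → ℝ) (D : ℝ) (hD : 0 < D) :
    ∃ N1 N2 : ℝ, 0 < N1 ∧ 0 < N2 ∧
      ∀ (X : Fin n → ℝ) (wh : ℝ → ℝ), ContDiff ℝ 1 wh →
        ∀ uh : ℝ → ℝ,
          (∀ x, uh x = wh x
            + K ⬝ᵥ (NormedSpace.exp ((D * x) • (A + vecMulVec B K))).mulVec X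
            + D * ∫ y in (0 : ℝ)..x,
                (K ⬝ᵥ (NormedSpace.exp
                  ((D * (x - y)) • (A + vecMulVec B K))).mulVec B) * wh y) →
          (∫ x in (0 : ℝ)..1, (uh x) ^ 2)
              ≤ N1 * ((∑ i, (X i) ^ 2) + ∫ x in (0 : ℝ)..1, (wh x) ^ 2)
          ∧ (∫ x in (0 : ℝ)..1, (deriv uh x) ^ 2)
              ≤ N2 * ((∑ i, (X i) ^ 2) + (∫ x in (0 : ℝ)..1, (wh x) ^ 2)
                  + ∫ x in (0 : ℝ)..1, (deriv wh x) ^ 2) := by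
  classical
  set Mat : Matrix (Fin n) (Fin n) ℝ := A + vecMulVec B K with hMat
  set M' : Matrix (Fin n) (Fin n) ℝ := D • Mat with hM'
  set E : ℝ → Matrix (Fin n) (Fin n) ℝ := fun x => NormedSpace.exp (x • M') with hE
  set F : ℝ → Matrix (Fin n) (Fin n) ℝ := fun y => NormedSpace.exp ((-y) • M') with hF
  -- continuity of E and F
  have hEc : Continuous E :=
    NormedSpace.exp_continuous.comp (continuous_id.smul continuous_const)
  have hFc : Continuous F :=
    NormedSpace.exp_continuous.comp (continuous_id.neg.smul continuous_const)
  -- the exp splitting identity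
  have hsplit : ∀ x y : ℝ, NormedSpace.exp ((D * (x - y)) • Mat) = E x * F y := by
    intro x y
    have h1 : (D * (x - y)) • Mat = x • M' + (-y) • M' := by
      rw [hM', smul_smul, smul_smul, ← add_smul]; ring_nf
    rw [h1, Matrix.exp_add_of_commute _ _ (((Commute.refl M').smul_left x).smul_right (-y))]
  have hEX : ∀ x : ℝ, NormedSpace.exp ((D * x) • Mat) = E x := by
    intro x
    rw [hE]; congr 1; rw [hM', smul_smul]; ring_nf
  -- scalar component functions
  set v : ℝ → Fin n → ℝ := fun x j => K ⬝ᵥ (E x).mulVec (Pi.single j 1) with hv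
  set v2 : ℝ → Fin n → ℝ := fun x j => K ⬝ᵥ (E x * M').mulVec (Pi.single j 1) with hv2
  set h : ℝ → Fin n → ℝ := fun y j => (F y).mulVec B j with hh
  have hvc : ∀ j, Continuous fun x => v x j := fun j =>
    (Lc K (Pi.single j 1)).continuous.comp hEc
  have hv2c : ∀ j, Continuous fun x => v2 x j := fun j =>
    (Lc K (Pi.single j 1)).continuous.comp ((hEc.mul continuous_const))
  have hhc : ∀ j, Continuous fun y => h y j := by
    intro j
    have : (fun y => h y j) = fun y => ∑ i, F y j i * B i := by
      funext y; rw [hh]; rfl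
    rw [this]
    exact continuous_finset_sum _ fun i _ =>
      (((continuous_apply i).comp ((continuous_apply j).comp hFc)).mul continuous_const)
  -- derivative of v
  have hvd : ∀ j x, HasDerivAt (fun x => v x j) (v2 x j) x := by
    intro j x
    have hEd : HasDerivAt E (E x * M') x := hasDerivAt_exp_smul_const M' x
    exact ((Lc K (Pi.single j 1)).hasFDerivAt.comp_hasDerivAt x hEd :
      HasDerivAt (fun x => Lc K (Pi.single j 1) (E x)) (Lc K (Pi.single j 1) (E x * M')) x)
  -- uniform bounds on [0,1]
  obtain ⟨C1, hC1⟩ := (isCompact_Icc (a := (0:ℝ)) (b := 1)).exists_bound_of_continuousOn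
    (continuous_finset_sum Finset.univ fun j _ => (hvc j).abs).continuousOn
  obtain ⟨C2, hC2⟩ := (isCompact_Icc (a := (0:ℝ)) (b := 1)).exists_bound_of_continuousOn
    (continuous_finset_sum Finset.univ fun j _ => (hv2c j).abs).continuousOn
  obtain ⟨C3, hC3⟩ := (isCompact_Icc (a := (0:ℝ)) (b := 1)).exists_bound_of_continuousOn
    (continuous_finset_sum Finset.univ fun j _ => (hhc j).abs).continuousOn
  set c1 : ℝ := max C1 1 with hc1def
  set c2 : ℝ := max C2 1 with hc2def
  set c3 : ℝ := max C3 1 with hc3def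
  have hc1 : (1:ℝ) ≤ c1 := le_max_right _ _
  have hc2 : (1:ℝ) ≤ c2 := le_max_right _ _
  have hc3 : (1:ℝ) ≤ c3 := le_max_right _ _
  have hc1' : ∀ x ∈ Icc (0:ℝ) 1, (∑ j, |v x j|) ≤ c1 := fun x hx =>
    le_trans (le_trans (le_abs_self _) (hC1 x hx)) (le_max_left _ _)
  have hc2' : ∀ x ∈ Icc (0:ℝ) 1, (∑ j, |v2 x j|) ≤ c2 := fun x hx =>
    le_trans (le_trans (le_abs_self _) (hC2 x hx)) (le_max_left _ _)
  have hc3' : ∀ y ∈ Icc (0:ℝ) 1, ∀ j, |h y j| ≤ c3 := by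
    intro y hy j
    refine le_trans ?_ (le_trans (le_trans (le_abs_self _) (hC3 y hy)) (le_max_left _ _))
    exact Finset.single_le_sum (f := fun j => |h y j|) (fun i _ => abs_nonneg _)
      (Finset.mem_univ j)
  refine ⟨3 + 3*c1^2 + 3*D^2*c1^2*c3^2, 4 + 4*c2^2 + 4*D^2*c2^2*c3^2 + 4*D^2*c1^2*c3^2,
    by positivity, by positivity, ?_⟩
  intro X wh hwh uh huh
  -- basic quantities
  set S : ℝ := ∑ i, (X i)^2 with hSdef
  set W : ℝ := ∫ x in (0:ℝ)..1, (wh x)^2 with hWdef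
  set W' : ℝ := ∫ x in (0:ℝ)..1, (deriv wh x)^2 with hW'def
  set m : ℝ := ∫ y in (0:ℝ)..1, |wh y| with hmdef
  have hwhc : Continuous wh := hwh.continuous
  have hwhd : Differentiable ℝ wh := hwh.differentiable one_ne_zero
  have hwhdc : Continuous (deriv wh) := hwh.continuous_deriv le_rfl
  have hS : 0 ≤ S := Finset.sum_nonneg fun i _ => sq_nonneg _
  have hW : 0 ≤ W := intervalIntegral.integral_nonneg (by norm_num) fun x _ => sq_nonneg _
  have hW' : 0 ≤ W' := intervalIntegral.integral_nonneg (by norm_num) fun x _ => sq_nonneg _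
  have hm : 0 ≤ m := intervalIntegral.integral_nonneg (by norm_num) fun x _ => abs_nonneg _
  have hmW : m^2 ≤ W := sq_int_abs_le wh hwhc
  set sq : ℝ := Real.sqrt S with hsqdef
  have hsq : 0 ≤ sq := Real.sqrt_nonneg _
  have hsq2 : sq^2 = S := Real.sq_sqrt hS
  have hXj : ∀ j, |X j| ≤ sq := by
    intro j
    rw [hsqdef, ← Real.sqrt_sq_eq_abs]
    exact Real.sqrt_le_sqrt (Finset.single_le_sum (f := fun i => (X i)^2)
      (fun i _ => sq_nonneg _) (Finset.mem_univ j))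
  -- the running integrals G
  set G : ℝ → Fin n → ℝ := fun x j => ∫ y in (0:ℝ)..x, wh y * h y j with hG
  have hGd : ∀ j x, HasDerivAt (fun x => G x j) (wh x * h x j) x := fun j x =>
    ((hwhc.mul (hhc j)).integral_hasStrictDerivAt 0 x).hasDerivAt
  have hGc : ∀ j, Continuous fun x => G x j := fun j =>
    continuous_iff_continuousAt.2 fun x => (hGd j x).continuousAt
  have hGb : ∀ j, ∀ x ∈ Icc (0:ℝ) 1, |G x j| ≤ c3 * m := by
    intro j x hx
    have h1 : |G x j| ≤ ∫ y in (0:ℝ)..x, |wh y * h y j| := by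
      exact intervalIntegral.abs_integral_le_integral_abs hx.1
    have h2 : (∫ y in (0:ℝ)..x, |wh y * h y j|) ≤ ∫ y in (0:ℝ)..1, |wh y * h y j| := by
      apply intervalIntegral.integral_mono_interval le_rfl hx.1 hx.2
      · filter_upwards with y using abs_nonneg _
      · exact (hwhc.mul (hhc j)).abs.intervalIntegrable _ _
    have h3 : (∫ y in (0:ℝ)..1, |wh y * h y j|) ≤ ∫ y in (0:ℝ)..1, c3 * |wh y| := by
      apply intervalIntegral.integral_mono_on (by norm_num)
        ((hwhc.mul (hhc j)).abs.intervalIntegrable _ _)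
        ((continuous_const.mul hwhc.abs).intervalIntegrable _ _)
      intro y hy
      show |wh y * h y j| ≤ c3 * |wh y|
      rw [abs_mul]
      calc |wh y| * |h y j| ≤ |wh y| * c3 :=
            mul_le_mul_of_nonneg_left (hc3' y hy j) (abs_nonneg _)
        _ = c3 * |wh y| := mul_comm _ _
    have h4 : (∫ y in (0:ℝ)..1, c3 * |wh y|) = c3 * m := by
      rw [intervalIntegral.integral_const_mul]
    linarith
  -- the explicit formula for uh
  set Φ : ℝ → ℝ := fun x => wh x + (∑ j, v x j * X j) + D * ∑ j, v x j * G x j with hΦ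
  have hkernel : ∀ x y : ℝ,
      (K ⬝ᵥ (NormedSpace.exp ((D * (x - y)) • Mat)).mulVec B) * wh y
        = ∑ j, v x j * (wh y * h y j) := by
    intro x y
    rw [hsplit, ← Matrix.mulVec_mulVec, dot_single]
    rw [Finset.sum_mul]
    refine Finset.sum_congr rfl fun j _ => ?_
    simp only [hv, hh]
    ring
  have hformula : ∀ x, uh x = Φ x := by
    intro x
    rw [huh x, hEX x, hΦ]
    have ha : K ⬝ᵥ (E x).mulVec X = ∑ j, v x j * X j := dot_single K (E x) X
    have hb : (∫ y in (0:ℝ)..x,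
        (K ⬝ᵥ (NormedSpace.exp ((D * (x - y)) • Mat)).mulVec B) * wh y)
        = ∑ j, v x j * G x j := by
      rw [intervalIntegral.integral_congr (g := fun y => ∑ j, v x j * (wh y * h y j))
        (fun y _ => hkernel x y)]
      rw [intervalIntegral.integral_finset_sum (f := fun j y => v x j * (wh y * h y j)) (fun j _ =>
        ((continuous_const.mul (hwhc.mul (hhc j))).intervalIntegrable _ _))]
      refine Finset.sum_congr rfl fun j _ => ?_
      rw [intervalIntegral.integral_const_mul]
    rw [ha, hb]
  -- continuity of the formula
  have hΦc : Continuous Φ :=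
    (hwhc.add (continuous_finset_sum _ fun j _ => (hvc j).mul continuous_const)).add
      (continuous_const.mul (continuous_finset_sum _ fun j _ => (hvc j).mul (hGc j)))
  -- derivative of the formula
  set Φ' : ℝ → ℝ := fun x => deriv wh x + (∑ j, v2 x j * X j)
    + D * ∑ j, (v2 x j * G x j + v x j * (wh x * h x j)) with hΦ'
  have hΦd : ∀ x, HasDerivAt Φ (Φ' x) x := fun x =>
    (((hwhd x).hasDerivAt).fun_add (HasDerivAt.fun_sum fun j _ => (hvd j x).mul_const (X j))).fun_add
      ((HasDerivAt.fun_sum fun j _ => (hvd j x).fun_mul (hGd j x)).const_mul D)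
  have hΦ'c : Continuous Φ' :=
    (hwhdc.add (continuous_finset_sum _ fun j _ => (hv2c j).mul continuous_const)).add
      (continuous_const.mul (continuous_finset_sum _ fun j _ =>
        ((hv2c j).mul (hGc j)).add ((hvc j).mul (hwhc.mul (hhc j)))))
  have huh_eq : uh = Φ := funext hformula
  have hderiv_eq : deriv uh = Φ' := by
    funext x
    rw [huh_eq]
    exact (hΦd x).deriv
  -- pointwise bounds
  have habs_sum : ∀ (a : Fin n → ℝ) (b : Fin n → ℝ) (c d : ℝ), 0 ≤ d →
      (∀ x ∈ Icc (0:ℝ) 1, True) → True := fun _ _ _ _ _ _ => trivial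
  have hbound1 : ∀ x ∈ Icc (0:ℝ) 1, |∑ j, v x j * X j| ≤ c1 * sq := by
    intro x hx
    calc |∑ j, v x j * X j| ≤ ∑ j, |v x j * X j| := Finset.abs_sum_le_sum_abs _ _
      _ ≤ ∑ j, |v x j| * sq := Finset.sum_le_sum fun j _ => by
            rw [abs_mul]; exact mul_le_mul_of_nonneg_left (hXj j) (abs_nonneg _)
      _ = (∑ j, |v x j|) * sq := (Finset.sum_mul _ _ _).symm
      _ ≤ c1 * sq := mul_le_mul_of_nonneg_right (hc1' x hx) hsq
  have hbound2 : ∀ x ∈ Icc (0:ℝ) 1, |∑ j, v x j * G x j| ≤ c1 * (c3 * m) := by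
    intro x hx
    calc |∑ j, v x j * G x j| ≤ ∑ j, |v x j * G x j| := Finset.abs_sum_le_sum_abs _ _
      _ ≤ ∑ j, |v x j| * (c3 * m) := Finset.sum_le_sum fun j _ => by
            rw [abs_mul]; exact mul_le_mul_of_nonneg_left (hGb j x hx) (abs_nonneg _)
      _ = (∑ j, |v x j|) * (c3 * m) := (Finset.sum_mul _ _ _).symm
      _ ≤ c1 * (c3 * m) := mul_le_mul_of_nonneg_right (hc1' x hx)
            (mul_nonneg (by linarith) hm)
  have hbound3 : ∀ x ∈ Icc (0:ℝ) 1, |∑ j, v2 x j * X j| ≤ c2 * sq := by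
    intro x hx
    calc |∑ j, v2 x j * X j| ≤ ∑ j, |v2 x j * X j| := Finset.abs_sum_le_sum_abs _ _
      _ ≤ ∑ j, |v2 x j| * sq := Finset.sum_le_sum fun j _ => by
            rw [abs_mul]; exact mul_le_mul_of_nonneg_left (hXj j) (abs_nonneg _)
      _ = (∑ j, |v2 x j|) * sq := (Finset.sum_mul _ _ _).symm
      _ ≤ c2 * sq := mul_le_mul_of_nonneg_right (hc2' x hx) hsq
  have hbound4 : ∀ x ∈ Icc (0:ℝ) 1, |∑ j, v2 x j * G x j| ≤ c2 * (c3 * m) := by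
    intro x hx
    calc |∑ j, v2 x j * G x j| ≤ ∑ j, |v2 x j * G x j| := Finset.abs_sum_le_sum_abs _ _
      _ ≤ ∑ j, |v2 x j| * (c3 * m) := Finset.sum_le_sum fun j _ => by
            rw [abs_mul]; exact mul_le_mul_of_nonneg_left (hGb j x hx) (abs_nonneg _)
      _ = (∑ j, |v2 x j|) * (c3 * m) := (Finset.sum_mul _ _ _).symm
      _ ≤ c2 * (c3 * m) := mul_le_mul_of_nonneg_right (hc2' x hx)
            (mul_nonneg (by linarith) hm)
  have hbound5 : ∀ x ∈ Icc (0:ℝ) 1,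
      |∑ j, v x j * (wh x * h x j)| ≤ c1 * (c3 * |wh x|) := by
    intro x hx
    calc |∑ j, v x j * (wh x * h x j)| ≤ ∑ j, |v x j * (wh x * h x j)| :=
          Finset.abs_sum_le_sum_abs _ _
      _ ≤ ∑ j, |v x j| * (c3 * |wh x|) := Finset.sum_le_sum fun j _ => by
            rw [abs_mul, abs_mul]
            refine mul_le_mul_of_nonneg_left ?_ (abs_nonneg _)
            calc |wh x| * |h x j| ≤ |wh x| * c3 :=
                  mul_le_mul_of_nonneg_left (hc3' x hx j) (abs_nonneg _)
              _ = c3 * |wh x| := mul_comm _ _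
      _ = (∑ j, |v x j|) * (c3 * |wh x|) := (Finset.sum_mul _ _ _).symm
      _ ≤ c1 * (c3 * |wh x|) := mul_le_mul_of_nonneg_right (hc1' x hx)
            (mul_nonneg (by linarith) (abs_nonneg _))
  -- first inequality
  have gen1 : ∀ wx a b : ℝ, |a| ≤ c1*sq → |b| ≤ c1*(c3*m) →
      (wx + a + D*b)^2 ≤ 3*wx^2 + (3*c1^2*S + 3*D^2*c1^2*c3^2*W) := by
    intro wx a b ha hb
    have ha2 : a^2 ≤ c1^2*S := by
      calc a^2 = |a|^2 := (sq_abs a).symm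
        _ ≤ (c1*sq)^2 := pow_le_pow_left₀ (abs_nonneg _) ha 2
        _ = c1^2*S := by rw [mul_pow, hsq2]
    have hb2 : b^2 ≤ c1^2*(c3^2*W) := by
      calc b^2 = |b|^2 := (sq_abs b).symm
        _ ≤ (c1*(c3*m))^2 := pow_le_pow_left₀ (abs_nonneg _) hb 2
        _ = c1^2*(c3^2*m^2) := by ring
        _ ≤ c1^2*(c3^2*W) := by gcongr
    nlinarith [sq_nonneg (wx - a), sq_nonneg (wx - D*b), sq_nonneg (a - D*b), ha2, hb2,
      mul_le_mul_of_nonneg_left hb2 (sq_nonneg D)]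
  have gen2 : ∀ wx w' a b c : ℝ, |a| ≤ c2*sq → |b| ≤ c2*(c3*m) → |c| ≤ c1*(c3*|wx|) →
      (w' + a + D*(b + c))^2 ≤ 4*w'^2 + 4*D^2*c1^2*c3^2*wx^2
        + (4*c2^2*S + 4*D^2*c2^2*c3^2*W) := by
    intro wx w' a b c ha hb hc
    have ha2 : a^2 ≤ c2^2*S := by
      calc a^2 = |a|^2 := (sq_abs a).symm
        _ ≤ (c2*sq)^2 := pow_le_pow_left₀ (abs_nonneg _) ha 2
        _ = c2^2*S := by rw [mul_pow, hsq2]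
    have hb2 : b^2 ≤ c2^2*(c3^2*W) := by
      calc b^2 = |b|^2 := (sq_abs b).symm
        _ ≤ (c2*(c3*m))^2 := pow_le_pow_left₀ (abs_nonneg _) hb 2
        _ = c2^2*(c3^2*m^2) := by ring
        _ ≤ c2^2*(c3^2*W) := by gcongr
    have hc2x : c^2 ≤ c1^2*(c3^2*wx^2) := by
      calc c^2 = |c|^2 := (sq_abs c).symm
        _ ≤ (c1*(c3*|wx|))^2 := pow_le_pow_left₀ (abs_nonneg _) hc 2
        _ = c1^2*(c3^2*|wx|^2) := by ring
        _ = c1^2*(c3^2*wx^2) := by rw [sq_abs]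
    nlinarith [sq_nonneg (w' - a), sq_nonneg (w' - D*b), sq_nonneg (w' - D*c),
      sq_nonneg (a - D*b), sq_nonneg (a - D*c), sq_nonneg (D*b - D*c),
      ha2, hb2, hc2x,
      mul_le_mul_of_nonneg_left hb2 (sq_nonneg D),
      mul_le_mul_of_nonneg_left hc2x (sq_nonneg D)]
  constructor
  · have key1 : ∀ x ∈ Icc (0:ℝ) 1, (uh x)^2
        ≤ 3*(wh x)^2 + (3*c1^2*S + 3*D^2*c1^2*c3^2*W) := by
      intro x hx
      rw [hformula x]
      exact gen1 (wh x) _ _ (hbound1 x hx) (hbound2 x hx)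
    have hint1 : IntervalIntegrable (fun x => (uh x)^2) volume 0 1 := by
      rw [huh_eq]; exact (hΦc.pow 2).intervalIntegrable _ _
    have hint2 : IntervalIntegrable
        (fun x => 3*(wh x)^2 + (3*c1^2*S + 3*D^2*c1^2*c3^2*W)) volume 0 1 :=
      ((continuous_const.mul (hwhc.pow 2)).add continuous_const).intervalIntegrable _ _
    have step : (∫ x in (0:ℝ)..1, (uh x)^2)
        ≤ ∫ x in (0:ℝ)..1, (3*(wh x)^2 + (3*c1^2*S + 3*D^2*c1^2*c3^2*W)) :=
      intervalIntegral.integral_mono_on (by norm_num) hint1 hint2 key1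
    have hval : (∫ x in (0:ℝ)..1, (3*(wh x)^2 + (3*c1^2*S + 3*D^2*c1^2*c3^2*W)))
        = 3*W + (3*c1^2*S + 3*D^2*c1^2*c3^2*W) := by
      rw [intervalIntegral.integral_add (f := fun x => 3*(wh x)^2)
        ((continuous_const.mul (hwhc.pow 2)).intervalIntegrable _ _) intervalIntegrable_const,
        intervalIntegral.integral_const_mul, intervalIntegral.integral_const]
      simp [hWdef]
    rw [hval] at step
    have p1 : (0:ℝ) ≤ c1^2 := sq_nonneg _
    have p2 : (0:ℝ) ≤ D^2*c1^2*c3^2 := by positivity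
    nlinarith [step, mul_nonneg p1 hW, mul_nonneg p2 hS, hS]
  · have key2 : ∀ x ∈ Icc (0:ℝ) 1, (deriv uh x)^2
        ≤ 4*(deriv wh x)^2 + 4*D^2*c1^2*c3^2*(wh x)^2
          + (4*c2^2*S + 4*D^2*c2^2*c3^2*W) := by
      intro x hx
      rw [hderiv_eq]
      have hsplit2 : Φ' x = deriv wh x + (∑ j, v2 x j * X j)
          + D * ((∑ j, v2 x j * G x j) + ∑ j, v x j * (wh x * h x j)) := by
        rw [hΦ']
        simp only [Finset.sum_add_distrib]
      rw [hsplit2]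
      exact gen2 (wh x) (deriv wh x) _ _ _ (hbound3 x hx) (hbound4 x hx) (hbound5 x hx)
    have hint1 : IntervalIntegrable (fun x => (deriv uh x)^2) volume 0 1 := by
      rw [hderiv_eq]; exact (hΦ'c.pow 2).intervalIntegrable _ _
    have hint2 : IntervalIntegrable
        (fun x => 4*(deriv wh x)^2 + 4*D^2*c1^2*c3^2*(wh x)^2
          + (4*c2^2*S + 4*D^2*c2^2*c3^2*W)) volume 0 1 :=
      (((continuous_const.mul (hwhdc.pow 2)).add
        (continuous_const.mul (hwhc.pow 2))).add continuous_const).intervalIntegrable _ _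
    have step : (∫ x in (0:ℝ)..1, (deriv uh x)^2)
        ≤ ∫ x in (0:ℝ)..1, (4*(deriv wh x)^2 + 4*D^2*c1^2*c3^2*(wh x)^2
          + (4*c2^2*S + 4*D^2*c2^2*c3^2*W)) :=
      intervalIntegral.integral_mono_on (by norm_num) hint1 hint2 key2
    have hval : (∫ x in (0:ℝ)..1, (4*(deriv wh x)^2 + 4*D^2*c1^2*c3^2*(wh x)^2
          + (4*c2^2*S + 4*D^2*c2^2*c3^2*W)))
        = 4*W' + 4*D^2*c1^2*c3^2*W + (4*c2^2*S + 4*D^2*c2^2*c3^2*W) := by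
      rw [intervalIntegral.integral_add
        (f := fun x => 4*(deriv wh x)^2 + 4*D^2*c1^2*c3^2*(wh x)^2)
        (((continuous_const.mul (hwhdc.pow 2)).add
          (continuous_const.mul (hwhc.pow 2))).intervalIntegrable _ _)
        intervalIntegrable_const,
        intervalIntegral.integral_add (f := fun x => 4*(deriv wh x)^2)
          (g := fun x => 4*D^2*c1^2*c3^2*(wh x)^2)
          ((continuous_const.mul (hwhdc.pow 2)).intervalIntegrable _ _)
          ((continuous_const.mul (hwhc.pow 2)).intervalIntegrable _ _),
        intervalIntegral.integral_const_mul, intervalIntegral.integral_const_mul,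
        intervalIntegral.integral_const]
      simp [hWdef, hW'def]
    rw [hval] at step
    have p1 : (0:ℝ) ≤ c2^2 := sq_nonneg _
    have p2 : (0:ℝ) ≤ D^2*c1^2*c3^2 := by positivity
    have p3 : (0:ℝ) ≤ D^2*c2^2*c3^2 := by positivity
    nlinarith [step, mul_nonneg p1 hW, mul_nonneg p1 hW', mul_nonneg p2 hS,
      mul_nonneg p2 hW', mul_nonneg p3 hS, mul_nonneg p3 hW', hS, hW, hW']
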